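/- A commutative ring A is a reduced purified ring if and only if whenever fg = 0 for f, g ∈ A, there exists an idempotent e ∈ A such that f = fe and g = g(1 − e). -/

import Mathlib

theorem reduced_purified_iff_idempotent_annihilation (A : Type*) [CommRing A] :
    (IsReduced A ∧
        ∀ p q : Ideal A, p ∈ minimalPrimes A → q ∈ minimalPrimes A → p ≠ q →
          ∃ e : A, IsIdempotentElem e ∧ e ∈ p ∧ 1 - e ∈ q) ↔
      ∀ f g : A, f * g = 0 →
        ∃ e : A, IsIdempotentElem e ∧ f = f * e ∧ g = g * (1 - e) := by
  constructor
  · rintro ⟨hred, hpur⟩ f g hfg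
    classical
    by_contra hcon
    push_neg at hcon
    -- the multiplicative set {g^n * ε : ε idempotent with f * ε = f}
    set S : Submonoid A :=
      { carrier := {x | ∃ (n : ℕ) (ε : A), IsIdempotentElem ε ∧ f * ε = f ∧ x = g ^ n * ε}
        one_mem' := ⟨0, 1, IsIdempotentElem.one, mul_one f, by simp⟩
        mul_mem' := by
          rintro x y ⟨n, ε, hε, hfε, rfl⟩ ⟨m, δ, hδ, hfδ, rfl⟩
          exact ⟨n + m, ε * δ, hε.mul hδ, by rw [← mul_assoc, hfε, hfδ],
            by rw [pow_add]; ring⟩ } with hSdef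
    have hS0 : (0 : A) ∉ S := by
      rintro ⟨n, ε, hε, hfε, h0⟩
      have hgε : g * ε = 0 := by
        have h2 : (g * ε) ^ (n + 1) = (g ^ n * ε) * g := by
          rw [mul_pow, hε.pow_succ_eq n, pow_succ]; ring
        rw [← h0, zero_mul] at h2
        exact hred.eq_zero _ ⟨n + 1, h2⟩
      exact hcon ε hε hfε.symm (show g * (1 - ε) = g by rw [mul_sub, mul_one, hgε, sub_zero]).symm
    have hdisj : Disjoint ((⊥ : Ideal A) : Set A) (S : Set A) := by
      rw [Set.disjoint_left]
      intro x hx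
      have : x = 0 := by simpa using hx
      subst this; exact hS0
    obtain ⟨P, hPprime, -, hPdisj⟩ := Ideal.exists_le_prime_disjoint ⊥ S hdisj
    haveI := hPprime
    obtain ⟨p₀, hp₀min, hp₀P⟩ := Ideal.exists_minimalPrimes_le (bot_le : (⊥ : Ideal A) ≤ P)
    haveI hp₀prime : p₀.IsPrime := hp₀min.1.1
    have hgS : g ∈ S := ⟨1, 1, IsIdempotentElem.one, mul_one f, by simp⟩
    have hgp₀ : g ∉ p₀ := fun h => Set.disjoint_left.mp hPdisj (hp₀P h) hgS
    have hfp₀ : f ∈ p₀ :=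
      (hp₀prime.mem_or_mem (show f * g ∈ p₀ by rw [hfg]; exact p₀.zero_mem)).resolve_right hgp₀
    -- the set of idempotents in p₀
    set E : Set A := {e | IsIdempotentElem e ∧ e ∈ p₀} with hEdef
    have hfrad : f ∈ (Ideal.span E).radical := by
      rw [Ideal.radical_eq_sInf]
      refine Ideal.mem_sInf.mpr ?_
      rintro r ⟨hEr, hrprime⟩
      haveI := hrprime
      obtain ⟨q, hqmin, hqr⟩ := Ideal.exists_minimalPrimes_le (bot_le : (⊥ : Ideal A) ≤ r)
      by_cases hfq : f ∈ q
      · exact hqr hfq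
      · have hne : p₀ ≠ q := fun h => hfq (h ▸ hfp₀)
        obtain ⟨e, he, hep, heq⟩ := hpur p₀ q hp₀min hqmin hne
        exfalso
        apply hrprime.ne_top
        rw [Ideal.eq_top_iff_one]
        have h1 : e ∈ r := hEr (Ideal.subset_span (show e ∈ E from ⟨he, hep⟩))
        have h2 : 1 - e ∈ r := hqr heq
        have := r.add_mem h1 h2
        simpa using this
    obtain ⟨n, hfn⟩ := Ideal.mem_radical_iff.mp hfrad
    obtain ⟨c, hcsupp, hcsum⟩ := Submodule.mem_span_set.mp hfn
    set t := c.support with htdef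
    set u := ∏ x ∈ t, (1 - x) with hudef
    have hidem_t : ∀ x ∈ t, IsIdempotentElem x ∧ x ∈ p₀ := fun x hx => hcsupp hx
    have hu_idem : IsIdempotentElem u :=
      Finset.prod_induction _ IsIdempotentElem (fun a b ha hb => ha.mul hb)
        IsIdempotentElem.one (fun x hx => ((hidem_t x hx).1).one_sub)
    have hxu : ∀ x ∈ t, x * u = 0 := by
      intro x hx
      rw [hudef, ← Finset.mul_prod_erase t _ hx, ← mul_assoc]
      have hx0 : x * (1 - x) = 0 := by
        rw [mul_sub, mul_one, (hidem_t x hx).1.eq, sub_self]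
      rw [hx0, zero_mul]
    have hfnu : f ^ n * u = 0 := by
      rw [← hcsum, Finsupp.sum, Finset.sum_mul]
      apply Finset.sum_eq_zero
      intro x hx
      rw [smul_eq_mul, mul_assoc, hxu x hx, mul_zero]
    have hfu : f * u = 0 := by
      apply hred.eq_zero _ ⟨n + 1, ?_⟩
      rw [mul_pow, hu_idem.pow_succ_eq n, pow_succ, mul_assoc, mul_comm f u, ← mul_assoc,
        hfnu, zero_mul]
    have hεT : f * (1 - u) = f := by rw [mul_sub, mul_one, hfu, sub_zero]
    have hε_idem : IsIdempotentElem (1 - u) := hu_idem.one_sub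
    have hup₀ : 1 - u ∈ p₀ := by
      have key : ∀ s : Finset A, (∀ x ∈ s, x ∈ p₀) → 1 - ∏ x ∈ s, (1 - x) ∈ p₀ := by
        intro s
        induction s using Finset.induction_on with
        | empty => intro _; simpa using p₀.zero_mem
        | @insert a s ha ih =>
          intro hmem
          rw [Finset.prod_insert ha]
          have h1 : 1 - ∏ x ∈ s, (1 - x) ∈ p₀ :=
            ih (fun x hx => hmem x (Finset.mem_insert_of_mem hx))
          have h2 : a ∈ p₀ := hmem a (Finset.mem_insert_self a s)
          have heq : 1 - (1 - a) * ∏ x ∈ s, (1 - x) =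
              (1 - ∏ x ∈ s, (1 - x)) + a * ∏ x ∈ s, (1 - x) := by ring
          rw [heq]
          exact p₀.add_mem h1 (p₀.mul_mem_right _ h2)
      exact key t (fun x hx => (hidem_t x hx).2)
    have hUS : (1 - u) ∈ S := ⟨0, 1 - u, hε_idem, hεT, by rw [pow_zero, one_mul]⟩
    exact Set.disjoint_left.mp hPdisj (hp₀P hup₀) hUS
  · intro H
    have hsq : ∀ x : A, x * x = 0 → x = 0 := by
      intro x hx
      obtain ⟨e, he, h1, h2⟩ := H x x hx
      calc x = x * e := h1
        _ = (x * (1 - e)) * e := by rw [← h2]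
        _ = 0 := by rw [mul_assoc, sub_mul, one_mul, he.eq, sub_self, mul_zero]
    have key : ∀ n : ℕ, ∀ x : A, x ^ n = 0 → x = 0 := by
      intro n
      induction n using Nat.strong_induction_on with
      | _ n ih =>
        intro x hxn
        match n, hxn with
        | 0, hxn =>
          have h1 : (1 : A) = 0 := by simpa using hxn
          calc x = x * 1 := (mul_one x).symm
            _ = 0 := by rw [h1, mul_zero]
        | 1, hxn => simpa using hxn
        | (m + 2), hxn =>
          have h1 : x ^ (m + 1) * x ^ (m + 1) = 0 := by
            have heq : x ^ (m + 1) * x ^ (m + 1) = x ^ (m + 2) * x ^ m := by ring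
            rw [heq, hxn, zero_mul]
          exact ih (m + 1) (by omega) x (hsq _ h1)
    refine ⟨⟨fun x hx => ?_⟩, ?_⟩
    · obtain ⟨n, hn⟩ := hx
      exact key n x hn
    · intro p q hp hq hne
      haveI hpP : p.IsPrime := hp.1.1
      haveI hqP : q.IsPrime := hq.1.1
      have hqp : ¬ q ≤ p := by
        intro hle
        exact hne (le_antisymm (hp.2 ⟨hqP, bot_le⟩ hle) hle)
      obtain ⟨x, hxq, hxp⟩ := SetLike.not_le_iff_exists.mp hqp
      have hnil : IsNilpotent (algebraMap A (Localization q.primeCompl) x) := by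
        rw [← mem_nilradical, nilradical, Ideal.zero_eq_bot, ← Ideal.map_bot (f := algebraMap A (Localization q.primeCompl)),
          IsLocalization.AtPrime.radical_map_of_mem_minimalPrimes (Localization q.primeCompl) q ⊥ hq,
          IsLocalization.AtPrime.map_eq_maximalIdeal]
        exact (IsLocalization.AtPrime.to_map_mem_maximal_iff _ q x).mpr hxq
      obtain ⟨n, hn⟩ := hnil
      rw [← map_pow] at hn
      obtain ⟨s, hs⟩ := (IsLocalization.map_eq_zero_iff q.primeCompl _ _).mp hn
      obtain ⟨e, he, h1, h2⟩ := H (↑s) (x ^ n) hs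
      refine ⟨e, he, ?_, ?_⟩
      · have h3 : x ^ n * e = 0 := by
          have heq : x ^ n * e = x ^ n - x ^ n * (1 - e) := by ring
          rw [heq, ← h2, sub_self]
        have hxnp : x ^ n ∉ p := fun hmem => hxp (hpP.mem_of_pow_mem n hmem)
        have hmem : x ^ n * e ∈ p := by rw [h3]; exact p.zero_mem
        exact (hpP.mem_or_mem hmem).resolve_left hxnp
      · have h4 : (s : A) * (1 - e) = 0 := by rw [mul_sub, mul_one, ← h1, sub_self]
        have hmem : (s : A) * (1 - e) ∈ q := by rw [h4]; exact q.zero_mem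
        exact (hqP.mem_or_mem hmem).resolve_left s.2
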